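/- For any finite group G and any positive integer n, the order of G divides the number of homomorphisms from the free abelian group ℤⁿ to G; equivalently, |G| divides the number of n-tuples of pairwise commuting elements of G. -/

import Mathlib

open Subgroup MulAction

private noncomputable def ct (n : ℕ) (G : Type*) [Group G] : ℕ :=
  Nat.card {v : Fin n → G | ∀ i j, Commute (v i) (v j)}

private lemma ct_congr {G H : Type*} [Group G] [Group H] (e : G ≃* H) (n : ℕ) :
    ct n G = ct n H := by
  apply Nat.card_congr
  refine Equiv.subtypeEquiv (Equiv.piCongrRight fun _ => e.toEquiv) fun v => ?_
  simp [Commute, SemiconjBy, ← map_mul, e.injective.eq_iff]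

private lemma ct_one (G : Type*) [Group G] : ct 1 G = Nat.card G := by
  apply Nat.card_congr
  refine ⟨fun v => v.1 0, fun g => ⟨fun _ => g, fun i j => by
    have : i = j := Subsingleton.elim i j
    simp [this]⟩, fun v => ?_, fun g => rfl⟩
  apply Subtype.ext
  funext i
  have : i = 0 := Subsingleton.elim i 0
  simp [this]

private lemma ct_succ (n : ℕ) (G : Type*) [Group G] [Fintype G] :
    ct (n+1) G = ∑ g : G, ct n (centralizer ({g} : Set G)) := by
  classical
  have key : {v : Fin (n+1) → G | ∀ i j, Commute (v i) (v j)} ≃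
      Σ g : G, {w : Fin n → centralizer ({g} : Set G) | ∀ i j, Commute (w i) (w j)} := by
    refine ⟨fun v => ⟨v.1 0, ⟨fun i => ⟨v.1 i.succ,
        mem_centralizer_singleton_iff.mpr (v.2 i.succ 0)⟩,
        fun i j => Subtype.ext (v.2 i.succ j.succ)⟩⟩,
      fun p => ⟨Fin.cons p.1 (fun i => (p.2.1 i : G)), ?_⟩, fun v => ?_, fun p => ?_⟩
    · intro i j
      refine Fin.cases ?_ (fun i' => ?_) i
      · refine Fin.cases (Commute.refl _) (fun j' => ?_) j
        simpa [Commute, SemiconjBy] using (mem_centralizer_singleton_iff.mp (p.2.1 j').2).symm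
      · refine Fin.cases ?_ (fun j' => ?_) j
        · simpa [Commute, SemiconjBy] using mem_centralizer_singleton_iff.mp (p.2.1 i').2
        · have := p.2.2 i' j'
          simpa [Commute, SemiconjBy, Subtype.ext_iff] using this
    · apply Subtype.ext
      funext i
      refine Fin.cases rfl (fun i' => ?_) i
      simp
    · rcases p with ⟨g, w, hw⟩
      simp
      exact HEq.rfl
  rw [ct, Nat.card_congr key]
  have inst : ∀ i : G, Fintype {w : Fin n → centralizer ({i} : Set G) | ∀ i j, Commute (w i) (w j)} :=
    fun i => Fintype.ofFinite _
  rw [Nat.card_eq_fintype_card, Fintype.card_sigma]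
  congr 1
  funext g
  rw [ct, Nat.card_eq_fintype_card]

private lemma ct_centralizer_conj {G : Type*} [Group G] (g c : G) (n : ℕ) :
    ct n (centralizer ({c * g * c⁻¹} : Set G)) = ct n (centralizer ({g} : Set G)) := by
  have h : (centralizer ({g} : Set G)).map ((MulAut.conj c : G ≃* G) : G →* G)
      = centralizer ({c * g * c⁻¹} : Set G) := by
    ext x
    simp only [Subgroup.mem_map, mem_centralizer_singleton_iff]
    constructor
    · rintro ⟨y, hy, rfl⟩
      show (c * y * c⁻¹) * (c * g * c⁻¹) = (c * g * c⁻¹) * (c * y * c⁻¹)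
      calc (c * y * c⁻¹) * (c * g * c⁻¹) = c * (y * g) * c⁻¹ := by group
        _ = c * (g * y) * c⁻¹ := by rw [hy]
        _ = (c * g * c⁻¹) * (c * y * c⁻¹) := by group
    · intro hx
      refine ⟨c⁻¹ * x * c, ?_, by show c * (c⁻¹ * x * c) * c⁻¹ = x; group⟩
      calc c⁻¹ * x * c * g = c⁻¹ * (x * (c * g * c⁻¹)) * c := by group
        _ = c⁻¹ * ((c * g * c⁻¹) * x) * c := by rw [hx]
        _ = g * (c⁻¹ * x * c) := by group
  calc ct n (centralizer ({c * g * c⁻¹} : Set G))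
      = ct n ((centralizer ({g} : Set G)).map ((MulAut.conj c : G ≃* G) : G →* G)) := by rw [h]
    _ = ct n (centralizer ({g} : Set G)) :=
        (ct_congr ((MulAut.conj c : G ≃* G).subgroupMap (centralizer ({g} : Set G))) n).symm

private lemma card_centralizer_eq {G : Type*} [Group G] (g : G) :
    Nat.card (centralizer ({g} : Set G)) = Nat.card (stabilizer (ConjAct G) g) := by
  apply Nat.card_congr
  refine Equiv.subtypeEquiv ConjAct.toConjAct.toEquiv fun x => ?_
  rw [Subgroup.centralizer_eq_comap_stabilizer]
  rfl

private lemma main_div (n : ℕ) : ∀ (G : Type*) [Group G] [Fintype G], 1 ≤ n →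
    Nat.card G ∣ ct n G := by
  induction n with
  | zero => intro _ _ _ h; omega
  | succ n ih =>
    intro G _ _ _
    rcases Nat.eq_zero_or_pos n with rfl | hn
    · rw [ct_one]
    classical
    rw [ct_succ]
    set f : G → ℕ := fun g => ct n (centralizer ({g} : Set G)) with hf
    set Ω := orbitRel.Quotient (ConjAct G) G
    set q : G → Ω := fun g => ⟦g⟧ with hq
    rw [← Finset.sum_fiberwise Finset.univ q f]
    refine Finset.dvd_sum fun ω _ => ?_
    -- f is constant on the fiber of ω, equal to f ω.out
    have hconst : ∀ g ∈ Finset.univ.filter (fun g => q g = ω), f g = f ω.out := by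
      intro g hg
      rw [Finset.mem_filter] at hg
      have : g ∈ orbit (ConjAct G) ω.out := by
        have h1 : q g = ⟦ω.out⟧ := hg.2.trans (Quotient.out_eq ω).symm
        exact Quotient.exact h1
    -- g conjugate to ω.out
      rw [ConjAct.mem_orbit_conjAct] at this
      rcases this with ⟨c, hc⟩
      have hgc : g = (c:G)⁻¹ * ω.out * ((c:G)⁻¹)⁻¹ := by
        calc g = (c:G)⁻¹ * ((c:G) * g) := by group
          _ = (c:G)⁻¹ * (ω.out * (c:G)) := by rw [hc.eq]
          _ = (c:G)⁻¹ * ω.out * ((c:G)⁻¹)⁻¹ := by group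
      rw [hf]
      simp only
      rw [hgc, ct_centralizer_conj]
    rw [Finset.sum_congr rfl hconst, Finset.sum_const, smul_eq_mul]
    -- the fiber has the cardinality of the orbit
    have hcard : (Finset.univ.filter (fun g => q g = ω)).card
        = Nat.card (orbit (ConjAct G) ω.out) := by
      rw [← Fintype.card_subtype, ← Nat.card_eq_fintype_card]
      apply Nat.card_congr
      refine Equiv.subtypeEquivRight fun g => ?_
      constructor
      · intro h1
        exact Quotient.exact (h1.trans (Quotient.out_eq ω).symm)
      · intro h1
        exact (Quotient.sound h1).trans (Quotient.out_eq ω)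
    rw [hcard]
    -- orbit-stabilizer + induction hypothesis
    obtain ⟨k, hk⟩ : Nat.card (stabilizer (ConjAct G) ω.out) ∣ f ω.out := by
      rw [← card_centralizer_eq]
      exact ih (centralizer ({ω.out} : Set G)) hn
    have horb : Nat.card (orbit (ConjAct G) ω.out) * Nat.card (stabilizer (ConjAct G) ω.out)
        = Nat.card G := by
      have := MulAction.card_orbit_mul_card_stabilizer_eq_card_group (ConjAct G) ω.out
      simpa [Nat.card_eq_fintype_card] using this
    rw [hk, ← mul_assoc, horb]
    exact Dvd.intro k rfl

theorem stmt_2 (G : Type*) [Group G] [Fintype G] (n : ℕ) (hn : 1 ≤ n) :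
    Nat.card G ∣ Nat.card {v : Fin n → G | ∀ i j, Commute (v i) (v j)} := by
  exact main_div n G hn
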